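/- arXiv:2012.11048 — 4 statements merged into one kernel-verified Lean document; each statement's English description precedes it below -/
import Mathlib

section
/- For every real x > 1/2, the digamma function satisfies ψ(x) > log(x − 1/2). -/
open Real Set

/-- The digamma function: derivative of `log ∘ Γ` on the reals. -/
noncomputable def digamma (x : ℝ) : ℝ := deriv (fun y : ℝ => Real.log (Real.Gamma y)) x

lemma gamma_ne_neg_nat {x : ℝ} (hx : 0 < x) : ∀ m : ℕ, x ≠ -m := by
  intro m h
  have : (0:ℝ) ≤ (m:ℝ) := Nat.cast_nonneg m
  nlinarith [hx]

lemma diff_logGamma {x : ℝ} (hx : 0 < x) :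
    DifferentiableAt ℝ (fun y : ℝ => Real.log (Real.Gamma y)) x :=
  (Real.differentiableAt_Gamma (gamma_ne_neg_nat hx)).log (Real.Gamma_pos_of_pos hx).ne'

/-- Lower bound from convexity: `log (y-1) ≤ ψ y` for `y > 1`. -/
lemma log_sub_one_le_digamma {y : ℝ} (hy : 1 < y) : Real.log (y - 1) ≤ digamma y := by
  have h0 : (0:ℝ) < y - 1 := by linarith
  have h1 : (0:ℝ) < y := by linarith
  have hs := Real.convexOn_log_Gamma.slope_le_deriv (x := y - 1) (y := y)
    (mem_Ioi.mpr h0) (mem_Ioi.mpr h1) (by linarith) (diff_logGamma h1)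
  rw [slope_def_field] at hs
  have hG : Real.Gamma y = (y - 1) * Real.Gamma (y - 1) := by
    have := Real.Gamma_add_one h0.ne'
    rw [sub_add_cancel] at this
    exact this
  have hlog : (Real.log ∘ Real.Gamma) y - (Real.log ∘ Real.Gamma) (y - 1)
      = Real.log (y - 1) := by
    simp only [Function.comp_apply, hG,
      Real.log_mul h0.ne' (Real.Gamma_pos_of_pos h0).ne']
    ring
  have : (Real.log (y - 1)) / (y - (y - 1)) ≤ deriv (Real.log ∘ Real.Gamma) y := by
    rwa [hlog] at hs
  simpa [digamma, Function.comp_def] using this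

/-- Recurrence: `ψ (x+1) = ψ x + 1/x`. -/
lemma digamma_add_one {x : ℝ} (hx : 0 < x) : digamma (x + 1) = digamma x + 1 / x := by
  have key : deriv (fun y : ℝ => Real.log (Real.Gamma (y + 1))) x = digamma (x + 1) := by
    simpa [digamma] using
      deriv_comp_add_const (f := fun y : ℝ => Real.log (Real.Gamma y)) (a := 1) (x := x)
  have heq : (fun y : ℝ => Real.log (Real.Gamma (y + 1)))
      =ᶠ[nhds x] fun y => Real.log y + Real.log (Real.Gamma y) := by
    filter_upwards [eventually_gt_nhds hx] with y hy
    rw [Real.Gamma_add_one hy.ne',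
      Real.log_mul hy.ne' (Real.Gamma_pos_of_pos hy).ne']
  have h2 : deriv (fun y : ℝ => Real.log (Real.Gamma (y + 1))) x
      = deriv (fun y : ℝ => Real.log y + Real.log (Real.Gamma y)) x := heq.deriv_eq
  have h3 : deriv (fun y : ℝ => Real.log y + Real.log (Real.Gamma y)) x
      = 1 / x + digamma x := by
    rw [deriv_fun_add (Real.differentiableAt_log hx.ne') (diff_logGamma hx), Real.deriv_log,
      one_div, digamma]
  rw [← key, h2, h3]; ring

/-- `ψ (x + n) = ψ x + ∑_{k<n} 1/(x+k)`. -/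
lemma digamma_add_nat {x : ℝ} (hx : 0 < x) (n : ℕ) :
    digamma (x + n) = digamma x + ∑ k ∈ Finset.range n, 1 / (x + k) := by
  induction n with
  | zero => simp
  | succ n ih =>
    have hxn : 0 < x + n := by positivity
    have : digamma (x + n + 1) = digamma (x + n) + 1 / (x + n) := digamma_add_one hxn
    rw [Finset.sum_range_succ]
    push_cast
    rw [show x + ((n:ℝ) + 1) = x + (n:ℝ) + 1 from by ring, this, ih]
    ring

/-- `2u < log (1+u) - log (1-u)` for `0 < u < 1`. -/
lemma two_mul_lt_log_div {u : ℝ} (h0 : 0 < u) (h1 : u < 1) :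
    2 * u < Real.log (1 + u) - Real.log (1 - u) := by
  set g : ℝ → ℝ := fun v => Real.log (1 + v) - Real.log (1 - v) - 2 * v with hg
  have hmono : StrictMonoOn g (Ico (0:ℝ) 1) := by
    apply strictMonoOn_of_deriv_pos (convex_Ico 0 1)
    · apply ContinuousOn.sub (ContinuousOn.sub ?_ ?_) (by fun_prop)
      · apply Real.continuousOn_log.comp (by fun_prop)
        intro v hv
        simp only [mem_Ico] at hv
        intro h; simp at h; linarith [hv.1]
      · apply Real.continuousOn_log.comp (by fun_prop)
        intro v hv
        simp only [mem_Ico] at hv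
        intro h; simp at h; linarith [hv.2]
    · intro v hv
      rw [interior_Ico] at hv
      obtain ⟨hv0, hv1⟩ := hv
      have ha : (0:ℝ) < 1 + v := by linarith
      have hb : (0:ℝ) < 1 - v := by linarith
      have d1 : HasDerivAt (fun w : ℝ => Real.log (1 + w)) (1 / (1 + v)) v := by
        simpa using ((hasDerivAt_id v).const_add 1).log ha.ne'
      have d2 : HasDerivAt (fun w : ℝ => Real.log (1 - w)) (-1 / (1 - v)) v := by
        simpa using ((hasDerivAt_id v).const_sub 1).log hb.ne'
      have d3 : HasDerivAt g (1 / (1 + v) - -1 / (1 - v) - 2) v := by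
        simpa using (d1.fun_sub d2).fun_sub ((hasDerivAt_id v).const_mul 2)
      rw [d3.deriv]
      have : 1 / (1 + v) - -1 / (1 - v) - 2 = 2 * v ^ 2 / ((1 + v) * (1 - v)) := by
        field_simp; ring
      rw [this]; positivity
  have h := hmono ⟨le_refl 0, one_pos⟩ ⟨h0.le, h1⟩ h0
  have hg0 : g 0 = 0 := by simp [hg]
  have hgu : g u = Real.log (1 + u) - Real.log (1 - u) - 2 * u := rfl
  rw [hg0, hgu] at h
  linarith

/-- `1/t < log (t + 1/2) - log (t - 1/2)` for `t > 1/2`. -/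
lemma one_div_lt_log_diff {t : ℝ} (ht : 1 / 2 < t) :
    1 / t < Real.log (t + 1 / 2) - Real.log (t - 1 / 2) := by
  have ht0 : (0:ℝ) < t := by linarith
  have hu0 : 0 < 1 / (2 * t) := by positivity
  have hu1 : 1 / (2 * t) < 1 := by
    rw [div_lt_one (by positivity)]; linarith
  have key := two_mul_lt_log_div hu0 hu1
  have e1 : 1 + 1 / (2 * t) = (t + 1 / 2) / t := by field_simp
  have e2 : 1 - 1 / (2 * t) = (t - 1 / 2) / t := by field_simp
  rw [e1, e2, Real.log_div (show (0:ℝ) < t + 1 / 2 by linarith).ne' ht0.ne',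
    Real.log_div (show (0:ℝ) < t - 1 / 2 by linarith).ne' ht0.ne'] at key
  have : 2 * (1 / (2 * t)) = 1 / t := by field_simp
  linarith [key, this.symm.le]

/-- For every real `x > 1/2`, the digamma function satisfies `ψ(x) > log (x − 1/2)`. -/
theorem log_lt_digamma (x : ℝ) (hx : 1 / 2 < x) : Real.log (x - 1 / 2) < digamma x := by
  have hx0 : (0:ℝ) < x := by linarith
  set ε : ℝ := Real.log (x + 1 / 2) - Real.log (x - 1 / 2) - 1 / x with hε
  have hεpos : 0 < ε := by
    have := one_div_lt_log_diff hx
    simp only [hε]; linarith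
  -- sum bound
  have hsum : ∀ n : ℕ, 1 ≤ n →
      ∑ k ∈ Finset.range n, 1 / (x + k)
        ≤ Real.log (x + n - 1 / 2) - Real.log (x - 1 / 2) - ε := by
    intro n hn
    induction n with
    | zero => omega
    | succ m ih =>
      rcases Nat.eq_or_lt_of_le hn with h1 | h1
      · -- m + 1 = 1, so m = 0
        have hm : m = 0 := by omega
        subst hm
        rw [Finset.sum_range_one, hε]
        push_cast
        rw [show x + 1 - 1 / 2 = x + 1 / 2 from by ring]
        norm_num
      · have hm1 : 1 ≤ m := by omega
        have hbound := one_div_lt_log_diff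
          (show (1:ℝ) / 2 < x + m by linarith [Nat.cast_nonneg (α := ℝ) m])
        have := ih hm1
        rw [Finset.sum_range_succ]
        push_cast
        rw [show x + ((m:ℝ) + 1) - 1 / 2 = x + (m:ℝ) + 1 / 2 from by ring]
        linarith [this, hbound]
  -- choose n large
  obtain ⟨n, hn⟩ := exists_nat_gt (1 / (2 * ε) + 1)
  have hnR : (1:ℝ) ≤ n := by
    have h := one_div_pos.mpr (by positivity : (0:ℝ) < 2 * ε)
    linarith
  have hn1 : 1 ≤ n := by exact_mod_cast hnR
  have hxn1 : (0:ℝ) < x + n - 1 := by linarith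
  -- tail bound: log(x+n-1/2) - log(x+n-1) ≤ (1/2)/(x+n-1) < ε
  have htail : Real.log (x + n - 1 / 2) - Real.log (x + n - 1) < ε := by
    have h1 : Real.log (x + n - 1 / 2) - Real.log (x + n - 1)
        = Real.log ((x + n - 1 / 2) / (x + n - 1)) := by
      rw [Real.log_div (show (0:ℝ) < x + ↑n - 1 / 2 by linarith).ne' hxn1.ne']
    rw [h1]
    have h2 : Real.log ((x + n - 1 / 2) / (x + n - 1))
        ≤ (x + n - 1 / 2) / (x + n - 1) - 1 :=
      Real.log_le_sub_one_of_pos (div_pos (by linarith) hxn1)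
    have h3 : (x + n - 1 / 2) / (x + n - 1) - 1 = (1 / 2) / (x + n - 1) := by
      field_simp
      ring
    have h4 : (1 / 2) / (x + n - 1) < ε := by
      have hlt : 1 / (2 * ε) < x + ↑n - 1 := by linarith
      calc (1 / 2) / (x + ↑n - 1) < (1 / 2) / (1 / (2 * ε)) :=
            div_lt_div_of_pos_left (by norm_num) (by positivity) hlt
        _ = ε := by field_simp
    linarith
  -- assemble
  have hrec := digamma_add_nat hx0 n
  have hlow : Real.log (x + n - 1) ≤ digamma (x + n) :=
    log_sub_one_le_digamma (show (1:ℝ) < x + n by linarith)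
  have hS := hsum n hn1
  have : digamma x = digamma (x + n) - ∑ k ∈ Finset.range n, 1 / (x + k) := by
    linarith [hrec]
  rw [this]
  linarith [hlow, hS, htail]
end

section
/- Let K ≥ 1, u : Fin K → ℝ, k : Fin K, and U ∈ ℝ, and suppose u k − u ℓ ≥ U for every ℓ ≠ k. Define q j = exp(u j) / ∑_{j'} exp(u j') for each j. Then for every j : Fin K, |q j − (1 if j = k else 0)| ≤ K · exp(−U). -/
/-- If the log-score of `k` exceeds every other log-score by at least `U`, then
the softmax distribution `q` is within `K·exp(−U)` of the point mass at `k`,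
coordinatewise. -/
theorem softmax_close_to_indicator (K : ℕ) (hK : 1 ≤ K) (u : Fin K → ℝ)
    (k : Fin K) (U : ℝ) (hgap : ∀ ℓ, ℓ ≠ k → u k - u ℓ ≥ U) :
    ∀ j : Fin K,
      |Real.exp (u j) / (∑ j', Real.exp (u j')) - (if j = k then 1 else 0)|
        ≤ K * Real.exp (-U) := by
  intro j
  set S := ∑ j', Real.exp (u j') with hSdef
  have hek : Real.exp (u k) ≤ S :=
    Finset.single_le_sum (fun i _ => (Real.exp_pos (u i)).le) (Finset.mem_univ k)
  have hS : 0 < S := lt_of_lt_of_le (Real.exp_pos _) hek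
  have hK1 : (1:ℝ) ≤ K := by exact_mod_cast hK
  have hbound : ∀ ℓ : Fin K, ℓ ≠ k → Real.exp (u ℓ) ≤ Real.exp (u k) * Real.exp (-U) := by
    intro ℓ hℓ
    rw [← Real.exp_add]
    exact Real.exp_le_exp.2 (by linarith [hgap ℓ hℓ])
  by_cases hj : j = k
  · subst hj
    rw [if_pos rfl]
    have hq1 : Real.exp (u j) / S ≤ 1 := div_le_one_of_le₀ hek hS.le
    rw [abs_sub_comm, abs_of_nonneg (by linarith)]
    have hsum : S - Real.exp (u j) = ∑ ℓ ∈ Finset.univ.erase j, Real.exp (u ℓ) := by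
      rw [Finset.sum_erase_eq_sub (Finset.mem_univ j)]
    have hsumle : ∑ ℓ ∈ Finset.univ.erase j, Real.exp (u ℓ)
        ≤ (K : ℝ) * (Real.exp (u j) * Real.exp (-U)) := by
      calc ∑ ℓ ∈ Finset.univ.erase j, Real.exp (u ℓ)
          ≤ ∑ _ℓ ∈ Finset.univ.erase j, Real.exp (u j) * Real.exp (-U) := by
            apply Finset.sum_le_sum
            intro i hi
            exact hbound i (Finset.ne_of_mem_erase hi)
        _ = (Finset.univ.erase j).card * (Real.exp (u j) * Real.exp (-U)) := by
            rw [Finset.sum_const, nsmul_eq_mul]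
        _ ≤ (K : ℝ) * (Real.exp (u j) * Real.exp (-U)) := by
            apply mul_le_mul_of_nonneg_right _ (by positivity)
            have : (Finset.univ.erase j).card ≤ K := by
              simpa using Finset.card_erase_le.trans (le_of_eq (Finset.card_univ))
            exact_mod_cast this
    have h1 : 1 - Real.exp (u j) / S = (S - Real.exp (u j)) / S := by
      field_simp
    rw [h1]
    calc (S - Real.exp (u j)) / S ≤ (S - Real.exp (u j)) / Real.exp (u j) := by
          apply div_le_div_of_nonneg_left _ (Real.exp_pos _) hek
          · rw [hsum]; positivity
      _ ≤ ((K : ℝ) * (Real.exp (u j) * Real.exp (-U))) / Real.exp (u j) := by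
          gcongr
          rw [hsum]; exact hsumle
      _ = K * Real.exp (-U) := by field_simp
  · simp only [if_neg hj, sub_zero]
    rw [abs_of_nonneg (by positivity)]
    calc Real.exp (u j) / S ≤ Real.exp (u j) / Real.exp (u k) :=
          div_le_div_of_nonneg_left (Real.exp_pos _).le (Real.exp_pos _) hek
      _ = Real.exp (u j - u k) := by rw [Real.exp_sub]
      _ ≤ Real.exp (-U) := Real.exp_le_exp.2 (by linarith [hgap j hj])
      _ ≤ K * Real.exp (-U) := le_mul_of_one_le_left (Real.exp_pos _).le hK1
end

section
/- Let K ≥ 1, u : Fin K → ℝ, k : Fin K, W : Fin K → ℝ, and U ∈ ℝ, η ≥ 0, and suppose u k − u ℓ ≥ U + η·(W ℓ) for every ℓ ≠ k. Define q j = exp(u j) / ∑_{j'} exp(u j'). Then q k ≥ 1 − K · exp(−U − η·min_ℓ W ℓ), and for every ℓ ≠ k, q ℓ ≤ exp(−U − η·(W ℓ)). -/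
/-- Constrained softmax bound (Lemma 7, abstract form): if
`u k − u ℓ ≥ U + η·(W ℓ)` for all `ℓ ≠ k`, with `η ≥ 0`, then the softmax
probability of `k` is at least `1 − K·exp(−U − η·min_ℓ W ℓ)` and that of each
`ℓ ≠ k` is at most `exp(−U − η·(W ℓ))`. -/
theorem constrained_softmax_bounds (K : ℕ) (hK : 1 ≤ K) (u : Fin K → ℝ)
    (k : Fin K) (W : Fin K → ℝ) (U η : ℝ) (hη : 0 ≤ η)
    (hgap : ∀ ℓ, ℓ ≠ k → u k - u ℓ ≥ U + η * W ℓ) :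
    Real.exp (u k) / (∑ j', Real.exp (u j'))
        ≥ 1 - K * Real.exp (-U - η * ⨅ ℓ, W ℓ) ∧
    ∀ ℓ, ℓ ≠ k →
      Real.exp (u ℓ) / (∑ j', Real.exp (u j')) ≤ Real.exp (-U - η * W ℓ) := by
  haveI : Nonempty (Fin K) := ⟨⟨0, hK⟩⟩
  set S := ∑ j', Real.exp (u j') with hS
  have hSpos : 0 < S := Finset.sum_pos (fun j _ => Real.exp_pos _) ⟨k, Finset.mem_univ k⟩
  have part2 : ∀ ℓ, ℓ ≠ k →
      Real.exp (u ℓ) / S ≤ Real.exp (-U - η * W ℓ) := by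
    intro ℓ hℓ
    have hle : Real.exp (u k) ≤ S :=
      Finset.single_le_sum (fun j _ => le_of_lt (Real.exp_pos _)) (Finset.mem_univ k)
    have h1 : Real.exp (u ℓ) / S ≤ Real.exp (u ℓ) / Real.exp (u k) :=
      div_le_div_of_nonneg_left (le_of_lt (Real.exp_pos _)) (Real.exp_pos _) hle
    have h2 : Real.exp (u ℓ) / Real.exp (u k) = Real.exp (u ℓ - u k) :=
      (Real.exp_sub _ _).symm
    have h3 : u ℓ - u k ≤ -U - η * W ℓ := by
      have := hgap ℓ hℓ; linarith
    calc Real.exp (u ℓ) / S ≤ Real.exp (u ℓ - u k) := h2 ▸ h1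
      _ ≤ Real.exp (-U - η * W ℓ) := Real.exp_le_exp.mpr h3
  refine ⟨?_, part2⟩
  set m := ⨅ ℓ, W ℓ with hm
  have hinf : ∀ ℓ, m ≤ W ℓ := fun ℓ =>
    ciInf_le (Set.Finite.bddBelow (Set.finite_range W)) ℓ
  have hWle : ∀ ℓ, Real.exp (-U - η * W ℓ) ≤ Real.exp (-U - η * m) := by
    intro ℓ
    apply Real.exp_le_exp.mpr
    have := mul_le_mul_of_nonneg_left (hinf ℓ) hη
    linarith
  have hsum : (1 : ℝ) - Real.exp (u k) / S = ∑ ℓ ∈ Finset.univ.erase k, Real.exp (u ℓ) / S := by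
    have : ∑ ℓ, Real.exp (u ℓ) / S = 1 := by
      rw [← Finset.sum_div, div_self (ne_of_gt hSpos)]
    rw [← this, Finset.sum_erase_eq_sub (Finset.mem_univ k)]
  have hbound : ∑ ℓ ∈ Finset.univ.erase k, Real.exp (u ℓ) / S
      ≤ ∑ ℓ ∈ Finset.univ.erase k, Real.exp (-U - η * m) := by
    apply Finset.sum_le_sum
    intro ℓ hℓ
    exact le_trans (part2 ℓ (Finset.ne_of_mem_erase hℓ)) (hWle ℓ)
  have hcard : ∑ ℓ ∈ Finset.univ.erase k, Real.exp (-U - η * m)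
      = (K - 1 : ℝ) * Real.exp (-U - η * m) := by
    rw [Finset.sum_const, Finset.card_erase_of_mem (Finset.mem_univ k)]
    simp [Finset.card_univ, nsmul_eq_mul]
    have : (1 : ℕ) ≤ K := hK
    push_cast [Nat.cast_sub this]
    ring
  have hexp : 0 ≤ Real.exp (-U - η * m) := le_of_lt (Real.exp_pos _)
  have : (K - 1 : ℝ) * Real.exp (-U - η * m) ≤ K * Real.exp (-U - η * m) := by
    nlinarith
  linarith [hsum, hbound, hcard.le, hcard.ge]
end

section
/- Let K ≥ 2, let k and ℓ be distinct elements of Fin K, let M and C be disjoint finite sets of indices, let y assign to each index in M ∪ C an element of Fin K with y j = k for all j ∈ M and y j ≠ k for all j ∈ C, and let q assign to each index j ∈ M ∪ C and each i : Fin K a real q j i with 0 ≤ q j i ≤ 1 and |q j i − (1 if y j = i else 0)| ≤ ε, where ε ≥ 0. Then ∑_{j∈M}(q j k − q j ℓ) + ∑_{j∈C}(q j ℓ − q j k) ≥ |M|·(1 − 2ε) − 2|C|·ε + |{j ∈ C : y j = ℓ}|. -/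
/-- Key lower bound in the proof of Lemma 7: for must-link neighbors `M` (true
label `k`) and cannot-link neighbors `C` (true label `≠ k`), with variational
probabilities `q` within `ε` of the true label indicators,
`∑_{j∈M}(q j k − q j ℓ) + ∑_{j∈C}(q j ℓ − q j k)
  ≥ |M|·(1 − 2ε) − 2|C|·ε + |{j ∈ C : y j = ℓ}|`. -/
theorem mustlink_cannotlink_bound {ι : Type*} [DecidableEq ι] (K : ℕ) (hK : 2 ≤ K)
    (k ℓ : Fin K) (hkl : k ≠ ℓ) (M C : Finset ι) (hMC : Disjoint M C)
    (y : ι → Fin K) (hyM : ∀ j ∈ M, y j = k) (hyC : ∀ j ∈ C, y j ≠ k)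
    (q : ι → Fin K → ℝ) (ε : ℝ) (hε : 0 ≤ ε)
    (hq01 : ∀ j ∈ M ∪ C, ∀ i : Fin K, 0 ≤ q j i ∧ q j i ≤ 1)
    (hqerr : ∀ j ∈ M ∪ C, ∀ i : Fin K,
      |q j i - (if y j = i then 1 else 0)| ≤ ε) :
    ∑ j ∈ M, (q j k - q j ℓ) + ∑ j ∈ C, (q j ℓ - q j k)
      ≥ M.card * (1 - 2 * ε) - 2 * C.card * ε
        + (C.filter (fun j => y j = ℓ)).card := by
  have h1 : ∀ j ∈ M, (1 - 2 * ε) ≤ q j k - q j ℓ := by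
    intro j hj
    have hjU : j ∈ M ∪ C := Finset.mem_union_left _ hj
    have hyk := hyM j hj
    have hk := hqerr j hjU k
    have hl := hqerr j hjU ℓ
    rw [if_pos hyk] at hk
    rw [if_neg (by rw [hyk]; exact hkl)] at hl
    have hk' := abs_le.mp hk
    have hl' := abs_le.mp hl
    linarith [hk'.1, hl'.2]
  have h2 : ∀ j ∈ C, (-(2 * ε) + if y j = ℓ then (1:ℝ) else 0) ≤ q j ℓ - q j k := by
    intro j hj
    have hjU : j ∈ M ∪ C := Finset.mem_union_right _ hj
    have hk := hqerr j hjU k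
    have hl := hqerr j hjU ℓ
    rw [if_neg (hyC j hj)] at hk
    have hk' := abs_le.mp hk
    by_cases hyl : y j = ℓ
    · rw [if_pos hyl] at hl
      have hl' := abs_le.mp hl
      simp only [if_pos hyl]
      linarith [hk'.2, hl'.1]
    · simp only [if_neg hyl]
      have := (hq01 j hjU ℓ).1
      linarith [hk'.2]
  have hM : (M.card : ℝ) * (1 - 2 * ε) ≤ ∑ j ∈ M, (q j k - q j ℓ) := by
    calc (M.card : ℝ) * (1 - 2 * ε) = ∑ _j ∈ M, (1 - 2 * ε) := by
          rw [Finset.sum_const, nsmul_eq_mul]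
      _ ≤ _ := Finset.sum_le_sum h1
  have hC : -(2 * C.card * ε) + ((C.filter (fun j => y j = ℓ)).card : ℝ)
      ≤ ∑ j ∈ C, (q j ℓ - q j k) := by
    have := Finset.sum_le_sum h2
    rw [Finset.sum_add_distrib, Finset.sum_const, Finset.sum_boole, nsmul_eq_mul] at this
    push_cast at this ⊢
    linarith
  linarith
end
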